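/- Let K be a field, n ≥ 2, R = K[x_1,…,x_n], and let M be an n×n matrix over R all of whose entries are homogeneous linear forms and which satisfies M ·ᵥ x = 0 as an identity in R^n, where x = (x_1,…,x_n) is the vector of variables. Let f = (f_1,…,f_n) be a vector of polynomials in R such that adj(M)_{j,i} = x_j · f_i for all i, j. If for some point a ∈ K^n the evaluated matrix M(a) ∈ Mat_{n×n}(K) (obtained by evaluating every entry at a) has rank at least n-1, then (f_1(a),…,f_n(a)) ≠ 0, i.e., f_i(a) ≠ 0 for some i. -/

import Mathlib

open MvPolynomial

/-- From a finitely-indexed family whose span has finrank at least `r`, one can select `r`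
members (injectively) that are linearly independent. -/
lemma aux_exists_inj_li {K V ι : Type*} [Field K] [AddCommGroup V] [Module K V]
    [Fintype ι] (v : ι → V) {r : ℕ}
    (h : r ≤ Module.finrank K (Submodule.span K (Set.range v))) :
    ∃ g : Fin r → ι, Function.Injective g ∧ LinearIndependent K (v ∘ g) := by
  classical
  obtain ⟨b, hb_sub, hb_span, hb_li⟩ := exists_linearIndependent K (Set.range v)
  have hbfin : b.Finite := (Set.finite_range v).subset hb_sub
  have : Fintype b := hbfin.fintype
  have hcard : Module.finrank K (Submodule.span K b) = Fintype.card b := by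
    rw [finrank_span_set_eq_card hb_li, Set.toFinset_card]
  have hr : r ≤ Fintype.card b := by rw [← hcard, hb_span]; exact h
  let e : Fin r → b := fun i => (Fintype.equivFin b).symm (Fin.castLE hr i)
  have he : Function.Injective e :=
    (Fintype.equivFin b).symm.injective.comp (Fin.castLE_injective hr)
  have hmem : ∀ i, (e i : V) ∈ Set.range v := fun i => hb_sub (e i).2
  choose g hg using hmem
  have hvg : v ∘ g = fun i => (e i : V) := funext fun i => hg i
  have hli : LinearIndependent K (v ∘ g) := by
    rw [hvg]; exact hb_li.comp e he
  refine ⟨g, ?_, hli⟩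
  intro x y hxy
  apply he
  apply Subtype.ext
  rw [← hg x, ← hg y, hxy]

/-- Any injective map `Fin n → Fin (n+1)` is `j.succAbove` composed with a
permutation, for the unique `j` not in its range. -/
lemma aux_inj_factor {n : ℕ} (g : Fin n → Fin (n + 1)) (hg : Function.Injective g) :
    ∃ (j : Fin (n + 1)) (e : Fin n ≃ Fin n), g = j.succAbove ∘ e := by
  classical
  have hcard : Fintype.card (Set.range g) = n := by
    rw [Set.card_range_of_injective hg, Fintype.card_fin]
  have hne : (Set.range g)ᶜ.Nonempty := by
    apply Set.nonempty_compl.mpr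
    intro hu
    have hs : Function.Surjective g := Set.range_eq_univ.mp hu
    have := Fintype.card_le_of_surjective g hs
    simp at this
  obtain ⟨j, hj⟩ := hne
  have hrange : Set.range g = {j}ᶜ := by
    apply Set.eq_of_subset_of_ncard_le
    · intro x hx
      simp only [Set.mem_compl_iff, Set.mem_singleton_iff]
      rintro rfl
      exact hj hx
    · have h1 : ({j}ᶜ : Set (Fin (n+1))).ncard = n := by
        rw [Set.ncard_eq_toFinset_card']
        simp [Finset.card_compl]
      have h2 : (Set.range g).ncard = n := by
        rw [Set.ncard_eq_toFinset_card', Set.toFinset_card, hcard]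
      rw [h1, h2]
    · exact Set.toFinite _
  have hrange' : Set.range j.succAbove = Set.range g := by
    rw [Fin.range_succAbove, hrange]
  have hsa : Function.Injective j.succAbove := Fin.succAbove_right_injective
  let e : Fin n ≃ Fin n :=
    (Equiv.ofInjective g hg).trans
      ((Equiv.setCongr hrange'.symm).trans (Equiv.ofInjective j.succAbove hsa).symm)
  refine ⟨j, e, funext fun x => ?_⟩
  show g x = j.succAbove (e x)
  have h1 : ((Equiv.ofInjective j.succAbove hsa) (e x) : Fin (n+1)) = g x := by
    simp only [e, Equiv.trans_apply, Equiv.apply_symm_apply]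
    rfl
  rw [← h1, Equiv.ofInjective_apply]

/-- Over a field, a square matrix of rank at least `n` (size `n+1`) has nonzero adjugate. -/
lemma aux_adjugate_ne_zero {K : Type*} [Field K] {n : ℕ}
    (A : Matrix (Fin (n + 1)) (Fin (n + 1)) K) (h : n ≤ A.rank) :
    A.adjugate ≠ 0 := by
  classical
  -- pick n linearly independent columns
  obtain ⟨c, hc_inj, hc_li⟩ := aux_exists_inj_li A.transpose (r := n)
    (by rw [Matrix.rank_eq_finrank_span_cols] at h; exact h)
  set B : Matrix (Fin (n + 1)) (Fin n) K := A.submatrix id c with hB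
  have hBT : LinearIndependent K (fun i => B.transpose i) := by
    have : (fun i => B.transpose i) = A.transpose ∘ c := by
      funext i; funext k
      simp [hB, Matrix.transpose_apply, Function.comp]
    rw [this]; exact hc_li
  have hBrank : B.rank = n := by
    have h1 : B.transpose.rank = n := by
      rw [LinearIndependent.rank_matrix (M := B.transpose) hBT, Fintype.card_fin]
    rw [← Matrix.rank_transpose, h1]
  -- pick n linearly independent rows of B
  obtain ⟨r, hr_inj, hr_li⟩ := aux_exists_inj_li (fun i => B i) (r := n)
    (by rw [Matrix.rank_eq_finrank_span_row] at hBrank; exact hBrank.symm.le)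
  set C : Matrix (Fin n) (Fin n) K := A.submatrix r c with hC
  have hCrows : LinearIndependent K (fun i => C i) := by
    have : (fun i => C i) = (fun i => B i) ∘ r := by
      funext i; funext k; simp [hC, hB, Function.comp]
    rw [this]; exact hr_li
  have hCunit : IsUnit C := Matrix.linearIndependent_rows_iff_isUnit.mp hCrows
  have hCdet : C.det ≠ 0 := by
    intro hz
    have := hCunit.map (Matrix.detMonoidHom)
    rw [Matrix.coe_detMonoidHom] at this
    rw [hz] at this
    exact not_isUnit_zero this
  -- factor r and c through succAbove
  obtain ⟨j, e₁, he₁⟩ := aux_inj_factor r hr_inj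
  obtain ⟨i, e₂, he₂⟩ := aux_inj_factor c hc_inj
  -- the minor with row j, column i deleted is nonzero
  have hminor : (A.submatrix j.succAbove i.succAbove).det ≠ 0 := by
    intro hz
    apply hCdet
    have hCeq : C = (A.submatrix j.succAbove i.succAbove).submatrix e₁ e₂ := by
      rw [hC, he₁, he₂, Matrix.submatrix_submatrix]
    have : C = ((A.submatrix j.succAbove i.succAbove).submatrix e₂ e₂).submatrix
        (e₁.trans e₂.symm) id := by
      rw [hCeq]
      ext x y
      simp [Matrix.submatrix_apply]
    rw [this, Matrix.det_permute, Matrix.det_submatrix_equiv_self, hz, mul_zero]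
  intro hadj
  apply hminor
  have := Matrix.adjugate_fin_succ_eq_det_submatrix A i j
  rw [hadj] at this
  simp only [Matrix.zero_apply] at this
  have hsign : ((-1 : K) ^ ((j : ℕ) + (i : ℕ))) ≠ 0 := by
    apply pow_ne_zero; norm_num
  field_simp at this
  exact (mul_eq_zero.mp this.symm).resolve_left hsign

theorem stmt7 (K : Type*) [Field K] (n : ℕ) (hn : 2 ≤ n)
    (M : Matrix (Fin n) (Fin n) (MvPolynomial (Fin n) K))
    (hlin : ∀ i j, (M i j).IsHomogeneous 1)
    (hMx : M.mulVec (fun i => X i) = 0)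
    (f : Fin n → MvPolynomial (Fin n) K)
    (hf : ∀ i j, M.adjugate j i = X j * f i)
    (a : Fin n → K)
    (hrank : n - 1 ≤ (M.map (eval a)).rank) :
    ∃ i, eval a (f i) ≠ 0 := by
  classical
  obtain ⟨m, rfl⟩ : ∃ m, n = m + 1 := ⟨n - 1, by omega⟩
  by_contra hcon
  push_neg at hcon
  set N : Matrix (Fin (m + 1)) (Fin (m + 1)) K := M.map (eval a) with hN
  have hadj : N.adjugate = 0 := by
    have hmap : N.adjugate = (M.adjugate).map (eval a) := by
      have h := (eval a : MvPolynomial (Fin (m+1)) K →+* K).map_adjugate M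
      rw [RingHom.mapMatrix_apply, RingHom.mapMatrix_apply] at h
      rw [hN, ← h]
    ext j i
    rw [hmap]
    simp only [Matrix.map_apply, hf i j, map_mul, hcon i, mul_zero, Matrix.zero_apply]
  have : m ≤ N.rank := by
    have : m + 1 - 1 = m := by omega
    rw [this] at hrank
    exact hrank
  exact aux_adjugate_ne_zero N this hadj
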